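/- Let t > 0 be such that Γ_K · 𝔇_t = H. Then there exists R₀ > 0 with the following property: whenever h = h(x₁,x₂,y₁,y₂,θ₁,θ₂) and h' = h(x₁',x₂',y₁',y₂',θ₁',θ₂') both lie in 𝔇_t, 𝓛h = 𝓛h', and 𝓛h contains no point of some open Euclidean ball of radius R ≥ R₀, then θ₁ = θ₁', θ₂ = θ₂', and y₁/y₂ = λ^{4r}·(y₁'/y₂') for some r ∈ {−1, 0, 1}. If moreover h, h' ∈ 𝔇_t', then h = h'. -/

import Mathlib

open MeasureTheory Matrix Set Pointwise

noncomputable section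

/-- The real embedding of `ℤ[√2]`, `a + b√2 ↦ a + b√2`. -/
def emb (α : Zsqrtd 2) : ℝ := (α.re : ℝ) + (α.im : ℝ) * Real.sqrt 2

/-- The Galois-conjugate embedding `σ`, `a + b√2 ↦ a − b√2`. -/
def embc (α : Zsqrtd 2) : ℝ := (α.re : ℝ) - (α.im : ℝ) * Real.sqrt 2

/-- The fundamental unit `λ = 1 + √2`. -/
def lam : ℝ := 1 + Real.sqrt 2

/-- `𝓛'`: the Minkowski embedding of `ℤ[√2]` in `ℝ²`. -/
def Lp : Set (ℝ × ℝ) := {p | ∃ α : Zsqrtd 2, p = (emb α, embc α)}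

/-- `v(β₁,β₂) = (β₁, β₂, σ(β₁), σ(β₂))`. -/
def latvec (β₁ β₂ : Zsqrtd 2) : Fin 4 → ℝ := ![emb β₁, emb β₂, embc β₁, embc β₂]

/-- `𝓛`: the Minkowski embedding of `ℤ[√2]²` in `ℝ⁴`. -/
def Lquad : Set (Fin 4 → ℝ) := {v | ∃ β₁ β₂ : Zsqrtd 2, v = latvec β₁ β₂}

/-- `𝓛h`, for a 4×4 real matrix `h` (row vectors, right multiplication). -/
def latimage (h : Matrix (Fin 4) (Fin 4) ℝ) : Set (Fin 4 → ℝ) :=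
  (fun v => Matrix.vecMul v h) '' Lquad

def nmat (x : ℝ) : Matrix (Fin 2) (Fin 2) ℝ := !![1, x; 0, 1]
def amat (y : ℝ) : Matrix (Fin 2) (Fin 2) ℝ := !![y, 0; 0, y⁻¹]
def kmat (θ : ℝ) : Matrix (Fin 2) (Fin 2) ℝ :=
  !![Real.cos θ, -Real.sin θ; Real.sin θ, Real.cos θ]

/-- Block diagonal 4×4 matrix from two 2×2 blocks. -/
def bd (A B : Matrix (Fin 2) (Fin 2) ℝ) : Matrix (Fin 4) (Fin 4) ℝ :=
  !![A 0 0, A 0 1, 0, 0;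
     A 1 0, A 1 1, 0, 0;
     0, 0, B 0 0, B 0 1;
     0, 0, B 1 0, B 1 1]

/-- `h(x₁,x₂,y₁,y₂,θ₁,θ₂) = diag(n(x₁)a(y₁)k(θ₁), n(x₂)a(y₂)k(θ₂))`. -/
def hmat (x₁ x₂ y₁ y₂ θ₁ θ₂ : ℝ) : Matrix (Fin 4) (Fin 4) ℝ :=
  bd (nmat x₁ * amat y₁ * kmat θ₁) (nmat x₂ * amat y₂ * kmat θ₂)

/-- `H = SL₂(ℝ)² ⊂ SL₄(ℝ)` (block diagonal). -/
def Hset : Set (Matrix (Fin 4) (Fin 4) ℝ) :=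
  {h | ∃ A B : Matrix (Fin 2) (Fin 2) ℝ, A.det = 1 ∧ B.det = 1 ∧ h = bd A B}

/-- `Γ_K = {diag(A, σ(A)) : A ∈ SL₂(ℤ[√2])}`. -/
def GammaK : Set (Matrix (Fin 4) (Fin 4) ℝ) :=
  {g | ∃ A : Matrix (Fin 2) (Fin 2) (Zsqrtd 2), A.det = 1 ∧ g = bd (A.map emb) (A.map embc)}

/-- `𝒲`: the open regular octagon of side length √2. -/
def Woct : Set (ℝ × ℝ) :=
  {p | |p.1| < lam / Real.sqrt 2 ∧ |p.2| < lam / Real.sqrt 2 ∧ |p.1| + |p.2| < lam}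

/-- `𝒲' = 𝒲 ∖ (√2−1)𝒲`. -/
def Wp : Set (ℝ × ℝ) := Woct \ ((Real.sqrt 2 - 1) • Woct)

/-- `θ̂ = 48√2/π⁴`, the density of visible points. -/
def thetaHat : ℝ := 48 * Real.sqrt 2 / Real.pi ^ 4

/-- `T(s)`: open triangle with vertices `(0,0)`, `(s/θ̂)^{1/2}(1,±1)`. -/
def Tset (s : ℝ) : Set (ℝ × ℝ) :=
  {p | 0 < p.1 ∧ p.1 < Real.sqrt (s / thetaHat) ∧ |p.2| < p.1}

/-- `𝔉`: a fundamental domain of `𝓛'`. -/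
def Fdom : Set (ℝ × ℝ) :=
  {p | ∃ r₁ ∈ Set.Ico (0:ℝ) 1, ∃ r₂ ∈ Set.Ico (0:ℝ) 1,
    p = (1 + r₁ + r₂ * Real.sqrt 2, 2 + r₁ - r₂ * Real.sqrt 2)}

/-- The Siegel domain `𝔇_t`. -/
def Dset (t : ℝ) : Set (Matrix (Fin 4) (Fin 4) ℝ) :=
  {h | ∃ x₁ x₂ y₁ y₂ θ₁ θ₂ : ℝ, (x₁, x₂) ∈ Fdom ∧ 0 < y₁ ∧ 0 < y₂ ∧ t ≤ y₁ * y₂ ∧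
    lam ^ (-2 : ℤ) ≤ y₁ / y₂ ∧ y₁ / y₂ ≤ lam ^ 2 ∧
    θ₁ ∈ Set.Ico 0 Real.pi ∧ θ₂ ∈ Set.Ico 0 Real.pi ∧ h = hmat x₁ x₂ y₁ y₂ θ₁ θ₂}

/-- Row vector times 2×2 matrix, on `ℝ × ℝ`. -/
def mul2 (p : ℝ × ℝ) (M : Matrix (Fin 2) (Fin 2) ℝ) : ℝ × ℝ :=
  (p.1 * M 0 0 + p.2 * M 1 0, p.1 * M 0 1 + p.2 * M 1 1)

/-- `r(s)`: the unique integer with `λ^{2r} ≤ s^{1/4} < λ^{2(r+1)}`. -/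
def rr (s : ℝ) : ℤ := ⌊Real.logb (lam ^ 2) (s ^ ((1:ℝ)/4))⌋

/-- `𝒯(s)` with explicit integer `r`: `λ^{−2r}T(s) × λ^{2r}𝒲`. -/
def calT (s : ℝ) (r : ℤ) : Set (Fin 4 → ℝ) :=
  {v | (lam ^ (2*r) * v 0, lam ^ (2*r) * v 1) ∈ Tset s ∧
       (lam ^ (-(2*r)) * v 2, lam ^ (-(2*r)) * v 3) ∈ Woct}

/-- `𝒯(s) = λ^{−2r(s)}T(s) × λ^{2r(s)}𝒲`. -/
def calTs (s : ℝ) : Set (Fin 4 → ℝ) := calT s (rr s)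

/-- Euclidean norm on `ℝ⁴`. -/
def enorm4 (v : Fin 4 → ℝ) : ℝ := Real.sqrt (∑ i, (v i) ^ 2)

/-- `𝓛h̃ = (ℤ(y₁,0,y₂,0) + ℤ√2(y₁,0,−y₂,0) + ℝ(0,1,0,0) + ℝ(0,0,0,1))·diag(k(θ₁),k(θ₂))`. -/
def Ltilde (y₁ y₂ θ₁ θ₂ : ℝ) : Set (Fin 4 → ℝ) :=
  {v | ∃ (m n : ℤ) (c₁ c₂ : ℝ),
    v = Matrix.vecMul ![((m:ℝ) + (n:ℝ) * Real.sqrt 2) * y₁, c₁,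
          ((m:ℝ) - (n:ℝ) * Real.sqrt 2) * y₂, c₂] (bd (kmat θ₁) (kmat θ₂))}

open Classical in
/-- Real-valued indicator of a proposition. -/
def ind (P : Prop) : ℝ := if P then 1 else 0

/-- `c_H = 3/π⁴`. -/
def cH : ℝ := 3 / Real.pi ^ 4

/-- `Y_t = {(y₁,y₂) : y₁,y₂ > 0, y₁y₂ ≥ t, y₁/y₂ ∈ (λ⁻²,λ²)}`. -/
def Yt (t : ℝ) : Set (ℝ × ℝ) :=
  {y | 0 < y.1 ∧ 0 < y.2 ∧ t ≤ y.1 * y.2 ∧ lam ^ (-2:ℤ) < y.1 / y.2 ∧ y.1 / y.2 < lam ^ 2}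

/-- The main term `G_M(s)` (depending on the Siegel-domain parameter `t`). -/
def GM (t s : ℝ) : ℝ :=
  cH * ∫ θ₂ in Set.Ico (0:ℝ) Real.pi, ∫ θ₁ in Set.Ico (0:ℝ) Real.pi, ∫ y in Yt t, ∫ x in Fdom,
    (y.1 ^ 3 * y.2 ^ 3)⁻¹ * ind (Ltilde y.1 y.2 θ₁ θ₂ ∩ calTs s = ∅)

/-- The error term `G_E(s)`. -/
def GE (t s : ℝ) : ℝ :=
  cH * ∫ θ₂ in Set.Ico (0:ℝ) Real.pi, ∫ θ₁ in Set.Ico (0:ℝ) Real.pi, ∫ y in Yt t, ∫ x in Fdom,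
    (y.1 ^ 3 * y.2 ^ 3)⁻¹ *
      ind (latimage (hmat x.1 x.2 y.1 y.2 θ₁ θ₂) ∩ calTs s = ∅ ∧
           (Ltilde y.1 y.2 θ₁ θ₂ ∩ calTs s).Nonempty)

/-- `J = [0,π/4] ∪ [3π/4,π)`. -/
def Jset : Set ℝ := Set.Icc 0 (Real.pi/4) ∪ Set.Ico (3*Real.pi/4) Real.pi

/-- `Y = {(y₁,y₂) : y₁ > 0, 1 < y₂ < λ²}`. -/
def Yset : Set (ℝ × ℝ) := {y | 0 < y.1 ∧ 1 < y.2 ∧ y.2 < lam ^ 2}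

/-- `T₁`: open triangle with vertices `(0,0)`, `(1,±1)`. -/
def T1 : Set (ℝ × ℝ) := {p | 0 < p.1 ∧ p.1 < 1 ∧ |p.2| < p.1}

/-- `ℓ₁(θ₁)`: first-coordinate projection of `θ̂^{−1/2}T₁k(−θ₁)`. -/
def ell1 (θ₁ : ℝ) : Set ℝ :=
  {x | ∃ p ∈ T1, x = (mul2 ((Real.sqrt thetaHat)⁻¹ • p) (kmat (-θ₁))).1}

/-- `ℓ₂(θ₂)`: first-coordinate projection of `𝒲k(−θ₂)`. -/
def ell2 (θ₂ : ℝ) : Set ℝ := {x | ∃ p ∈ Woct, x = (mul2 p (kmat (-θ₂))).1}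

/-- `C_𝒫 = 2304(2−√2)/π⁸`. -/
def CP : ℝ := 2304 * (2 - Real.sqrt 2) / Real.pi ^ 8

/-- `ζ_K(2) = π⁴/(48√2)`. -/
def zetaK2 : ℝ := Real.pi ^ 4 / (48 * Real.sqrt 2)

/-- `𝒯'(s) = T(s) × 𝒲`. -/
def Tprime (s : ℝ) : Set (Fin 4 → ℝ) :=
  {v | (v 0, v 1) ∈ Tset s ∧ (v 2, v 3) ∈ Woct}

/-- `L₁(θ₁)` from Lemma 3.4: projection of `λ^{−2r}T(s)k(−θ₁)` onto the x-axis. -/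
def L1set (s : ℝ) (r : ℤ) (θ₁ : ℝ) : Set ℝ :=
  {x | ∃ p ∈ Tset s, x = (mul2 ((lam ^ (-(2*r)) : ℝ) • p) (kmat (-θ₁))).1}

/-- `L₂(θ₂)`: projection of `λ^{2r}𝒲k(−θ₂)` onto the x-axis. -/
def L2set (r : ℤ) (θ₂ : ℝ) : Set ℝ :=
  {x | ∃ p ∈ Woct, x = (mul2 ((lam ^ (2*r) : ℝ) • p) (kmat (-θ₂))).1}

/-- `n(x)a(y)k(θ)` where `y,θ` are determined by `y⁻¹(sin θ, cos θ) = z`. -/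
def hz (z : ℝ × ℝ) (x : ℝ) : Matrix (Fin 2) (Fin 2) ℝ :=
  nmat x * amat (Real.sqrt (z.1 ^ 2 + z.2 ^ 2))⁻¹ *
    !![(Real.sqrt (z.1 ^ 2 + z.2 ^ 2))⁻¹ * z.2, -((Real.sqrt (z.1 ^ 2 + z.2 ^ 2))⁻¹ * z.1);
       (Real.sqrt (z.1 ^ 2 + z.2 ^ 2))⁻¹ * z.1, (Real.sqrt (z.1 ^ 2 + z.2 ^ 2))⁻¹ * z.2]

/-- The function `F₂` of Lemma 4.7. -/
def F2 (z₁ : ℝ) : ℝ :=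
  (24 / Real.pi ^ 4) * ∫ z₂ in Set.Ioo (-z₁) z₁, ∫ w in Wp, ∫ x in Fdom,
    ind (latimage (bd (hz (z₁, z₂) x.1) (hz w x.2)) ∩ Tprime (z₁ ^ 2 * thetaHat) = ∅)

/-- The box `B(α₃,α₄)`. -/
def Bbox (α₃ α₄ : Zsqrtd 2) (C₁ s : ℝ) : Set (ℝ × ℝ) :=
  {x | |x.1 + emb α₄ / emb α₃| ≤ C₁ / Real.sqrt s ∧
       |x.2 + embc α₄ / embc α₃| ≤ C₁ / Real.sqrt s}

/-- The matrix `h` determined by `s, z₂, w, x₁, x₂` via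
`y₁⁻¹(sin θ₁, cos θ₁) = λ^{−2r}(θ̂^{−1/2}s^{1/2}, z₂)`, `y₂⁻¹(sin θ₂, cos θ₂) = λ^{2r}w`. -/
def hfull (s z₂ : ℝ) (w : ℝ × ℝ) (x₁ x₂ : ℝ) : Matrix (Fin 4) (Fin 4) ℝ :=
  bd (hz ((lam ^ (-(2 * rr s)) : ℝ) • (Real.sqrt (s / thetaHat), z₂)) x₁)
     (hz ((lam ^ (2 * rr s) : ℝ) • w) x₂)

/-- `F⁺_{(α₃,α₄)}(s)`. -/
def Fplus (α₃ α₄ : Zsqrtd 2) (C₁ s : ℝ) : ℝ :=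
  (Real.sqrt s)⁻¹ * ∫ z₂ in Set.Ioo (0:ℝ) (Real.sqrt (s / thetaHat)), ∫ w in Wp,
    ∫ x in Bbox α₃ α₄ C₁ s, ind (latimage (hfull s z₂ w x.1 x.2) ∩ calTs s = ∅)

/-- `F⁻_{(α₃,α₄)}(s)`. -/
def Fminus (α₃ α₄ : Zsqrtd 2) (C₁ s : ℝ) : ℝ :=
  (Real.sqrt s)⁻¹ * ∫ z₂ in Set.Ioo (-Real.sqrt (s / thetaHat)) (0:ℝ), ∫ w in Wp,
    ∫ x in Bbox α₃ α₄ C₁ s, ind (latimage (hfull s z₂ w x.1 x.2) ∩ calTs s = ∅)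

/-- `F_{(α₃,α₄)}(s)`. -/
def Ffull (α₃ α₄ : Zsqrtd 2) (C₁ s : ℝ) : ℝ :=
  (Real.sqrt s)⁻¹ *
    ∫ z₂ in Set.Ioo (-Real.sqrt (s / thetaHat)) (Real.sqrt (s / thetaHat)), ∫ w in Wp,
      ∫ x in Bbox α₃ α₄ C₁ s, ind (latimage (hfull s z₂ w x.1 x.2) ∩ calTs s = ∅)

/-- `v₁ = (α₃, α₄, σ(α₃), σ(α₄))`. -/
def vv1 (α₃ α₄ : Zsqrtd 2) : Fin 4 → ℝ := ![emb α₃, emb α₄, embc α₃, embc α₄]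

/-- `v₂ = (√2α₃, √2α₄, −√2σ(α₃), −√2σ(α₄))`. -/
def vv2 (α₃ α₄ : Zsqrtd 2) : Fin 4 → ℝ :=
  ![Real.sqrt 2 * emb α₃, Real.sqrt 2 * emb α₄,
    -(Real.sqrt 2 * embc α₃), -(Real.sqrt 2 * embc α₄)]

/-- `b₁ = (α₃, α₄, 0, 0)`. -/
def bb1 (α₃ α₄ : Zsqrtd 2) : Fin 4 → ℝ := ![emb α₃, emb α₄, 0, 0]

/-- `b₂ = (0, 0, σ(α₃), σ(α₄))`. -/
def bb2 (α₃ α₄ : Zsqrtd 2) : Fin 4 → ℝ := ![0, 0, embc α₃, embc α₄]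

/-- The subgrid `𝓛_v = v + ℤv₁ + ℤv₂`. -/
def Lv (α₃ α₄ : Zsqrtd 2) (v : Fin 4 → ℝ) : Set (Fin 4 → ℝ) :=
  {u | ∃ m n : ℤ, u = v + (m:ℝ) • vv1 α₃ α₄ + (n:ℝ) • vv2 α₃ α₄}

/-- The filled plane `Π_v = v + ℝb₁ + ℝb₂`. -/
def Piv (α₃ α₄ : Zsqrtd 2) (v : Fin 4 → ℝ) : Set (Fin 4 → ℝ) :=
  {u | ∃ c₁ c₂ : ℝ, u = v + c₁ • bb1 α₃ α₄ + c₂ • bb2 α₃ α₄}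

/-- `d(s) = θ̂^{−1/2}λ^{−2r}s^{1/2}`. -/
def ds (s : ℝ) : ℝ := lam ^ (-(2 * rr s)) * Real.sqrt (s / thetaHat)

/-- The explicit integral representation `Φ(s)` of the limiting gap distribution `F(s)`. -/
def Phi (s : ℝ) : ℝ :=
  (1 / ((2:ℝ) ^ ((11:ℝ)/2) * Real.sqrt thetaHat * zetaK2 * Real.sqrt s)) *
    ∫ z₂ in Set.Ioo (-Real.sqrt (s / thetaHat)) (Real.sqrt (s / thetaHat)), ∫ w in Wp,
      ∫ x in Fdom, ind (latimage (hfull s z₂ w x.1 x.2) ∩ calTs s = ∅)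


section Aux

local notation "s2" => Real.sqrt 2

lemma hs2sq : s2 ^ 2 = 2 := Real.sq_sqrt (by norm_num)
lemma hs2pos : (0:ℝ) < s2 := Real.sqrt_pos.mpr (by norm_num)
lemma hs2lt : s2 < 3/2 := by
  nlinarith [hs2sq, hs2pos]
lemma hs2gt : 1 < s2 := by nlinarith [hs2sq, hs2pos]

lemma emb_mk (m n : ℤ) : emb ⟨m, n⟩ = (m:ℝ) + (n:ℝ) * s2 := rfl
lemma embc_mk (m n : ℤ) : embc ⟨m, n⟩ = (m:ℝ) - (n:ℝ) * s2 := rfl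

lemma emb_zero : emb 0 = 0 := by simp [emb]
lemma embc_zero : embc 0 = 0 := by simp [embc]
lemma emb_one : emb 1 = 1 := by simp [emb]
lemma embc_one : embc 1 = 1 := by simp [embc]

/-- product of the two embeddings is the (integer) norm -/
lemma emb_mul_embc (c : Zsqrtd 2) : emb c * embc c = ((c.re^2 - 2 * c.im^2 : ℤ) : ℝ) := by
  simp only [emb, embc]
  push_cast
  linear_combination (-(c.im:ℝ)^2) * hs2sq

lemma two_nonsquare : ∀ n : ℤ, (2:ℤ) ≠ n * n := by
  intro n h
  have h1a : -1 ≤ n := by nlinarith [sq_nonneg (n+1)]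
  have h1b : n ≤ 1 := by nlinarith [sq_nonneg (n-1)]
  interval_cases n <;> omega

lemma zsqrtd_zero_of_norm_small (c : Zsqrtd 2) (h : |emb c * embc c| < 1) : c = 0 := by
  rw [emb_mul_embc] at h
  have h2 : |(c.re^2 - 2*c.im^2 : ℤ)| < 1 := by exact_mod_cast abs_lt.mpr (abs_lt.mp h)
  rcases abs_lt.mp h2 with ⟨hl, hr⟩
  have h3 : c.re^2 - 2*c.im^2 = 0 := by nlinarith
  have h4 : Zsqrtd.norm c = 0 := by
    rw [Zsqrtd.norm_def]; linear_combination h3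
  exact (Zsqrtd.norm_eq_zero two_nonsquare c).mp h4

end Aux



lemma nak (x y θ : ℝ) :
    nmat x * amat y * kmat θ =
    !![y * Real.cos θ + x * y⁻¹ * Real.sin θ, -(y * Real.sin θ) + x * y⁻¹ * Real.cos θ;
       y⁻¹ * Real.sin θ, y⁻¹ * Real.cos θ] := by
  simp [nmat, amat, kmat, Matrix.mul_fin_two]

lemma vecMul_bd (v : Fin 4 → ℝ) (P Q : Matrix (Fin 2) (Fin 2) ℝ) :
    Matrix.vecMul v (bd P Q) =
    ![v 0 * P 0 0 + v 1 * P 1 0, v 0 * P 0 1 + v 1 * P 1 1,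
      v 2 * Q 0 0 + v 3 * Q 1 0, v 2 * Q 0 1 + v 3 * Q 1 1] := by
  funext i
  fin_cases i <;>
    simp [Matrix.vecMul, dotProduct, bd, Fin.sum_univ_four, Matrix.vecHead,
      Matrix.vecTail, -mul_eq_zero] <;> ring

lemma vecMul_latvec_hmat (β₁ β₂ : Zsqrtd 2) (x₁ x₂ y₁ y₂ θ₁ θ₂ : ℝ) :
    Matrix.vecMul (latvec β₁ β₂) (hmat x₁ x₂ y₁ y₂ θ₁ θ₂) =
    ![(emb β₁ * y₁) * Real.cos θ₁ + ((emb β₁ * x₁ + emb β₂) * y₁⁻¹) * Real.sin θ₁,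
      -(emb β₁ * y₁) * Real.sin θ₁ + ((emb β₁ * x₁ + emb β₂) * y₁⁻¹) * Real.cos θ₁,
      (embc β₁ * y₂) * Real.cos θ₂ + ((embc β₁ * x₂ + embc β₂) * y₂⁻¹) * Real.sin θ₂,
      -(embc β₁ * y₂) * Real.sin θ₂ + ((embc β₁ * x₂ + embc β₂) * y₂⁻¹) * Real.cos θ₂] := by
  rw [hmat, nak, nak, vecMul_bd]
  funext i
  fin_cases i <;> simp [latvec] <;> ring


lemma round_pair (A B : ℝ) : ∃ β : Zsqrtd 2, |emb β - A| ≤ 5/4 ∧ |embc β - B| ≤ 5/4 := by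
  set x := (A+B)/2 with hx
  set y := (A-B)/(2*Real.sqrt 2) with hy
  have hs2 : (0:ℝ) < Real.sqrt 2 := hs2pos
  have hAid : A = x + y * Real.sqrt 2 := by
    rw [hx, hy]; field_simp; ring
  have hBid : B = x - y * Real.sqrt 2 := by
    rw [hx, hy]; field_simp; ring
  refine ⟨⟨round x, round y⟩, ?_, ?_⟩
  · have h1 := abs_sub_round x
    have h2 := abs_sub_round y
    have : emb ⟨round x, round y⟩ - A = ((round x : ℝ) - x) + ((round y : ℝ) - y) * Real.sqrt 2 := by
      rw [emb_mk, hAid]; push_cast; ring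
    rw [this]
    calc |((round x : ℝ) - x) + ((round y : ℝ) - y) * Real.sqrt 2|
        ≤ |(round x : ℝ) - x| + |((round y : ℝ) - y) * Real.sqrt 2| := abs_add_le _ _
      _ = |(round x : ℝ) - x| + |(round y : ℝ) - y| * Real.sqrt 2 := by
          rw [abs_mul, abs_of_pos hs2]
      _ ≤ 5/4 := by
          rw [abs_sub_comm ((round x : ℝ)) x, abs_sub_comm ((round y : ℝ)) y]
          nlinarith [abs_nonneg (y - (round y : ℝ)), hs2lt, hs2pos]
  · have h1 := abs_sub_round x
    have h2 := abs_sub_round y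
    have : embc ⟨round x, round y⟩ - B = ((round x : ℝ) - x) - ((round y : ℝ) - y) * Real.sqrt 2 := by
      rw [embc_mk, hBid]; push_cast; ring
    rw [this]
    calc |((round x : ℝ) - x) - ((round y : ℝ) - y) * Real.sqrt 2|
        ≤ |(round x : ℝ) - x| + |((round y : ℝ) - y) * Real.sqrt 2| := abs_sub _ _
      _ = |(round x : ℝ) - x| + |(round y : ℝ) - y| * Real.sqrt 2 := by
          rw [abs_mul, abs_of_pos hs2]
      _ ≤ 5/4 := by
          rw [abs_sub_comm ((round x : ℝ)) x, abs_sub_comm ((round y : ℝ)) y]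
          nlinarith [abs_nonneg (y - (round y : ℝ)), hs2lt, hs2pos]

lemma hlam2 : lam^2 = 3 + 2*Real.sqrt 2 := by
  rw [lam]; linear_combination hs2sq

lemma plane_bound (x y θ q1 q2 p0 p1 e1 e2 : ℝ) (hy : 0 < y)
    (hq1 : q1 = p0 * Real.cos θ - p1 * Real.sin θ)
    (hq2 : q2 = p0 * Real.sin θ + p1 * Real.cos θ)
    (hb1 : |e1 - q1 / y| ≤ 5/4) (hb2 : |e2 - (q2 * y - e1 * x)| ≤ 5/4) :
    ((e1*y) * Real.cos θ + ((e1*x+e2)*y⁻¹) * Real.sin θ - p0)^2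
      + (-(e1*y) * Real.sin θ + ((e1*x+e2)*y⁻¹) * Real.cos θ - p1)^2
      ≤ 2*y^2 + 2*(y⁻¹)^2 := by
  have hrot : ((e1*y) * Real.cos θ + ((e1*x+e2)*y⁻¹) * Real.sin θ - p0)^2
      + (-(e1*y) * Real.sin θ + ((e1*x+e2)*y⁻¹) * Real.cos θ - p1)^2
      = (e1*y - q1)^2 + ((e1*x+e2)*y⁻¹ - q2)^2 := by
    rw [hq1, hq2]
    linear_combination ((e1*y)^2 + ((e1*x+e2)*y⁻¹)^2 - p0^2 - p1^2) * Real.sin_sq_add_cos_sq θ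
  rw [hrot]
  have t1 : (e1*y - q1)^2 ≤ 2*y^2 := by
    have he : e1*y - q1 = (e1 - q1/y) * y := by field_simp
    have hsq : (e1 - q1/y)^2 ≤ (5/4)^2 := sq_le_sq' (abs_le.mp hb1).1 (abs_le.mp hb1).2
    rw [he, mul_pow]
    nlinarith [sq_nonneg y]
  have t2 : ((e1*x+e2)*y⁻¹ - q2)^2 ≤ 2*(y⁻¹)^2 := by
    have he : (e1*x+e2)*y⁻¹ - q2 = (e2 - (q2*y - e1*x)) * y⁻¹ := by field_simp; ring
    have hsq : (e2 - (q2*y - e1*x))^2 ≤ (5/4)^2 := sq_le_sq' (abs_le.mp hb2).1 (abs_le.mp hb2).2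
    rw [he, mul_pow]
    nlinarith [sq_nonneg (y⁻¹)]
  linarith

set_option maxHeartbeats 1000000 in
lemma ball_forces (t x₁ x₂ y₁ y₂ θ₁ θ₂ R : ℝ) (p : Fin 4 → ℝ) (ht : 0 < t)
    (hy₁ : 0 < y₁) (hy₂ : 0 < y₂) (hyt : t ≤ y₁ * y₂)
    (hrat₁ : y₁ ≤ (3 + 2*Real.sqrt 2) * y₂) (hrat₂ : y₂ ≤ (3 + 2*Real.sqrt 2) * y₁)
    (hR : 1 + Real.sqrt (16*lam^2 + 8*lam^2/t) ≤ R)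
    (hball : ∀ v ∈ latimage (hmat x₁ x₂ y₁ y₂ θ₁ θ₂), R ≤ enorm4 (v - p)) :
    2 < y₁ * y₂ := by
  by_contra hcon
  push_neg at hcon
  obtain ⟨β₁, hb11, hb12⟩ := round_pair
    ((p 0 * Real.cos θ₁ - p 1 * Real.sin θ₁) / y₁)
    ((p 2 * Real.cos θ₂ - p 3 * Real.sin θ₂) / y₂)
  obtain ⟨β₂, hb21, hb22⟩ := round_pair
    ((p 0 * Real.sin θ₁ + p 1 * Real.cos θ₁) * y₁ - emb β₁ * x₁)
    ((p 2 * Real.sin θ₂ + p 3 * Real.cos θ₂) * y₂ - embc β₁ * x₂)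
  have P1 := plane_bound x₁ y₁ θ₁ _ _ (p 0) (p 1) (emb β₁) (emb β₂) hy₁ rfl rfl hb11 hb21
  have P2 := plane_bound x₂ y₂ θ₂ _ _ (p 2) (p 3) (embc β₁) (embc β₂) hy₂ rfl rfl hb12 hb22
  have hy1sq : y₁^2 ≤ 2*(3 + 2*Real.sqrt 2) := by nlinarith
  have hy2sq : y₂^2 ≤ 2*(3 + 2*Real.sqrt 2) := by nlinarith
  have hy1inv : (y₁⁻¹)^2 ≤ (3 + 2*Real.sqrt 2)/t := by
    rw [inv_pow, le_div_iff₀ ht, inv_mul_le_iff₀ (by positivity : (0:ℝ) < y₁^2)]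
    nlinarith
  have hy2inv : (y₂⁻¹)^2 ≤ (3 + 2*Real.sqrt 2)/t := by
    rw [inv_pow, le_div_iff₀ ht, inv_mul_le_iff₀ (by positivity : (0:ℝ) < y₂^2)]
    nlinarith
  have hmem : Matrix.vecMul (latvec β₁ β₂) (hmat x₁ x₂ y₁ y₂ θ₁ θ₂)
      ∈ latimage (hmat x₁ x₂ y₁ y₂ θ₁ θ₂) := ⟨latvec β₁ β₂, ⟨β₁, β₂, rfl⟩, rfl⟩
  have hRle := hball _ hmem
  have hkey : enorm4 (Matrix.vecMul (latvec β₁ β₂) (hmat x₁ x₂ y₁ y₂ θ₁ θ₂) - p)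
      ≤ Real.sqrt (16*lam^2 + 8*lam^2/t) := by
    rw [vecMul_latvec_hmat, enorm4]
    apply Real.sqrt_le_sqrt
    rw [Fin.sum_univ_four]
    simp only [Pi.sub_apply, Matrix.cons_val_zero, Matrix.cons_val_one, Matrix.head_cons,
      Matrix.cons_val_two, Matrix.tail_cons, Matrix.cons_val_three]
    have hdiv : 8*lam^2/t = 8*((3 + 2*Real.sqrt 2)/t) := by rw [hlam2]; ring
    have hlam2' : 16*lam^2 = 16*(3 + 2*Real.sqrt 2) := by rw [hlam2]
    have hC : (0:ℝ) ≤ 3 + 2*Real.sqrt 2 := by positivity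
    have hCt : (0:ℝ) ≤ (3 + 2*Real.sqrt 2)/t := by positivity
    linarith [P1, P2]
  have hs : 0 ≤ Real.sqrt (16*lam^2 + 8*lam^2/t) := Real.sqrt_nonneg _
  linarith

lemma block_step1 (y y' θ θ' C D x' : ℝ) (hy : 0 < y) (hy' : 0 < y')
    (hθ : θ ∈ Set.Ico 0 Real.pi) (hθ' : θ' ∈ Set.Ico 0 Real.pi)
    (E0 : C * y' * Real.cos θ' + (C * x' + D) * y'⁻¹ * Real.sin θ' = y⁻¹ * Real.sin θ)
    (E1 : -(C * y') * Real.sin θ' + (C * x' + D) * y'⁻¹ * Real.cos θ' = y⁻¹ * Real.cos θ) :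
    (C * y * y')^2 ≤ 1 ∧ (C = 0 → θ = θ' ∧ D * y = y') := by
  have hpy : (C*y')^2 + ((C*x'+D)*y'⁻¹)^2 = (y⁻¹)^2 := by
    linear_combination (C*y'*Real.cos θ' + (C*x'+D)*y'⁻¹*Real.sin θ' + y⁻¹*Real.sin θ) * E0
      + (-(C*y')*Real.sin θ' + (C*x'+D)*y'⁻¹*Real.cos θ' + y⁻¹*Real.cos θ) * E1
      - ((C*y')^2 + ((C*x'+D)*y'⁻¹)^2) * (Real.sin_sq_add_cos_sq θ')
      + (y⁻¹)^2 * (Real.sin_sq_add_cos_sq θ)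
  constructor
  · have h1 : (C*y')^2 ≤ (y⁻¹)^2 := by nlinarith [sq_nonneg ((C*x'+D)*y'⁻¹)]
    have hyy : y⁻¹ * y = 1 := inv_mul_cancel₀ (ne_of_gt hy)
    calc (C*y*y')^2 = (C*y')^2 * y^2 := by ring
      _ ≤ (y⁻¹)^2 * y^2 := mul_le_mul_of_nonneg_right h1 (sq_nonneg y)
      _ = (y⁻¹*y)^2 := by ring
      _ = 1 := by rw [hyy]; norm_num
  · intro hC
    subst hC
    have e0 : D*y'⁻¹*Real.sin θ' = y⁻¹*Real.sin θ := by linear_combination E0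
    have e1 : D*y'⁻¹*Real.cos θ' = y⁻¹*Real.cos θ := by linear_combination E1
    have hDD : (D*y'⁻¹)*(D*y'⁻¹) = y⁻¹*y⁻¹ := by linear_combination hpy
    have hyinv : (0:ℝ) < y⁻¹ := inv_pos.mpr hy
    rcases mul_self_eq_mul_self_iff.mp hDD with h | h
    · have hsin : Real.sin θ' = Real.sin θ := by
        rw [h] at e0
        exact mul_left_cancel₀ (ne_of_gt hyinv) e0
      have hcos : Real.cos θ' = Real.cos θ := by
        rw [h] at e1
        exact mul_left_cancel₀ (ne_of_gt hyinv) e1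
      have hθeq : θ = θ' := Real.injOn_cos ⟨hθ.1, hθ.2.le⟩ ⟨hθ'.1, hθ'.2.le⟩ hcos.symm
      refine ⟨hθeq, ?_⟩
      have h2 : D * y'⁻¹ * (y * y') = y⁻¹ * (y * y') := by rw [h]
      field_simp at h2
      have h3 : (D*y)*y' = y'*y' := by linear_combination y' * h2
      exact mul_right_cancel₀ (ne_of_gt hy') h3
    · exfalso
      rw [h] at e0 e1
      have hs1 : 0 ≤ Real.sin θ := Real.sin_nonneg_of_nonneg_of_le_pi hθ.1 hθ.2.le
      have hs2 : 0 ≤ Real.sin θ' := Real.sin_nonneg_of_nonneg_of_le_pi hθ'.1 hθ'.2.le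
      have hssum : Real.sin θ = 0 ∧ Real.sin θ' = 0 := by
        constructor <;> nlinarith [e0, hyinv]
      have hθ0 : θ = 0 := by
        have := Real.sin_eq_zero_iff_of_lt_of_lt
          (by linarith [hθ.1, Real.pi_pos] : -Real.pi < θ) hθ.2
        exact this.mp hssum.1
      have hθ0' : θ' = 0 := by
        have := Real.sin_eq_zero_iff_of_lt_of_lt
          (by linarith [hθ'.1, Real.pi_pos] : -Real.pi < θ') hθ'.2
        exact this.mp hssum.2
      rw [hθ0, hθ0'] at e1
      simp [Real.cos_zero] at e1
      nlinarith [e1, hyinv]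

lemma block_step2 (y y' θ A B x x' : ℝ) (hy : 0 < y) (hy' : 0 < y')
    (E0 : A*y'*Real.cos θ + (A*x'+B)*y'⁻¹*Real.sin θ = y*Real.cos θ + x*y⁻¹*Real.sin θ)
    (E1 : -(A*y')*Real.sin θ + (A*x'+B)*y'⁻¹*Real.cos θ = -y*Real.sin θ + x*y⁻¹*Real.cos θ) :
    A*y' = y ∧ (A*x'+B)*y'⁻¹ = x*y⁻¹ := by
  constructor
  · linear_combination Real.cos θ * E0 - Real.sin θ * E1 - (A*y' - y) * (Real.sin_sq_add_cos_sq θ)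
  · linear_combination Real.sin θ * E0 + Real.cos θ * E1
      - ((A*x'+B)*y'⁻¹ - x*y⁻¹) * (Real.sin_sq_add_cos_sq θ)

lemma prod_small (C C' a b : ℝ) (h1 : (C*a)^2 ≤ 1) (h2 : (C'*b)^2 ≤ 1) (hab : 4 < a*b) :
    |C*C'| < 1 := by
  have hsq : (C*C'*(a*b))^2 ≤ 1 := by nlinarith [sq_nonneg (C*a), sq_nonneg (C'*b)]
  by_contra hcon
  push_neg at hcon
  have h3 : 1 ≤ (C*C')^2 := by nlinarith [sq_abs (C*C'), abs_nonneg (C*C')]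
  nlinarith [sq_nonneg (a*b), h3, hab]


lemma pos_factor (u v w : ℝ) (h : u * v = w) (hv : 0 < v) (hw : 0 < w) : 0 < u := by
  nlinarith

lemma unle (Cc a b : ℝ) (hC : 0 < Cc) (hb : 0 < b) (h : Cc⁻¹ ≤ a / b) : b ≤ Cc * a := by
  have h2 := (le_div_iff₀ hb).mp h
  nlinarith [mul_inv_cancel₀ (ne_of_gt hC)]

lemma unlt (Cc a b : ℝ) (hC : 0 < Cc) (hb : 0 < b) (h : Cc⁻¹ < a / b) : b < Cc * a := by
  have h2 := (lt_div_iff₀ hb).mp h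
  nlinarith [mul_inv_cancel₀ (ne_of_gt hC)]

lemma four_lt (y₁ y₂ y₁' y₂' : ℝ) (h1 : 2 < y₁*y₂) (h2 : 2 < y₁'*y₂') :
    4 < (y₁*y₁')*(y₂*y₂') := by nlinarith

lemma xdiff (x x' y e : ℝ) (hy : 0 < y) (h : (x' + e)*y⁻¹ = x*y⁻¹) : e = x - x' := by
  field_simp at h
  linarith

lemma hlam4 : lam^(4:ℕ) = 17+12*Real.sqrt 2 := by
  rw [lam]; linear_combination (Real.sqrt 2^2 + 4*Real.sqrt 2 + 8)*hs2sq

lemma inv1712 : (17+12*Real.sqrt 2)⁻¹ = 17-12*Real.sqrt 2 := by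
  have h : (17+12*Real.sqrt 2) * (17-12*Real.sqrt 2) = 1 := by
    linear_combination (-144)*hs2sq
  exact inv_eq_of_mul_eq_one_right h

lemma key32 : (3+2*Real.sqrt 2)*(3-2*Real.sqrt 2) = 1 := by
  linear_combination (-4)*hs2sq

lemma ratio32 (y₁ y₂ y₁' y₂' : ℝ) (hy₂ : 0 < y₂) (hy₂' : 0 < y₂')
    (hA1 : (3+2*Real.sqrt 2)*y₁' = y₁) (hA2 : (3-2*Real.sqrt 2)*y₂' = y₂) :
    y₁ / y₂ = (17+12*Real.sqrt 2) * (y₁'/y₂') := by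
  field_simp
  linear_combination (-y₂')*hA1 + ((17+12*Real.sqrt 2)*y₁')*hA2 + 24*y₁'*y₂'*hs2sq

lemma ratio3m2 (y₁ y₂ y₁' y₂' : ℝ) (hy₂ : 0 < y₂) (hy₂' : 0 < y₂')
    (hA1 : (3-2*Real.sqrt 2)*y₁' = y₁) (hA2 : (3+2*Real.sqrt 2)*y₂' = y₂) :
    y₁ / y₂ = (17-12*Real.sqrt 2) * (y₁'/y₂') := by
  field_simp
  linear_combination (-y₂')*hA1 + ((17-12*Real.sqrt 2)*y₁')*hA2 + 24*y₁'*y₂'*hs2sq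

lemma contra32 (y₁ y₂ y₁' y₂' : ℝ)
    (hA1 : (3+2*Real.sqrt 2)*y₁' = y₁) (hA2 : (3-2*Real.sqrt 2)*y₂' = y₂)
    (g2 : y₁ < (3+2*Real.sqrt 2)*y₂) (g3 : y₂' < (3+2*Real.sqrt 2)*y₁') : False := by
  rw [← hA2] at g2
  have h2 : (3+2*Real.sqrt 2)*((3-2*Real.sqrt 2)*y₂') = y₂' := by
    linear_combination (-4*y₂')*hs2sq
  linarith [hA1, g3]

lemma contra3m2 (y₁ y₂ y₁' y₂' : ℝ)
    (hA1 : (3-2*Real.sqrt 2)*y₁' = y₁) (hA2 : (3+2*Real.sqrt 2)*y₂' = y₂)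
    (g1 : y₂ < (3+2*Real.sqrt 2)*y₁) (g4 : y₁' < (3+2*Real.sqrt 2)*y₂') : False := by
  rw [← hA1] at g1
  have h2 : (3+2*Real.sqrt 2)*((3-2*Real.sqrt 2)*y₁') = y₁' := by
    linear_combination (-4*y₁')*hs2sq
  linarith [hA2, g4]

set_option maxHeartbeats 1000000 in
lemma fdom_unique (x₁ x₂ x₁' x₂' : ℝ) (b : Zsqrtd 2)
    (hxF : (x₁, x₂) ∈ Fdom) (hxF' : (x₁', x₂') ∈ Fdom)
    (h1 : emb b = x₁ - x₁') (h2 : embc b = x₂ - x₂') : x₁ = x₁' ∧ x₂ = x₂' := by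
  obtain ⟨r₁, hr1, r₂, hr2, hx⟩ := hxF
  obtain ⟨r₁', hr1', r₂', hr2', hx'⟩ := hxF'
  rw [Prod.mk.injEq] at hx hx'
  obtain ⟨hxa, hxb⟩ := hx
  obtain ⟨hxa', hxb'⟩ := hx'
  have hsum : emb b + embc b = 2*(b.re:ℝ) := by simp only [emb, embc]; ring
  have hdiff : emb b - embc b = 2*(b.im:ℝ)*Real.sqrt 2 := by simp only [emb, embc]; ring
  have hbre : (b.re:ℝ) = r₁ - r₁' := by
    linarith [hsum, h1, h2, hxa, hxb, hxa', hxb']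
  have hbim : ((b.im:ℝ) - (r₂ - r₂'))*Real.sqrt 2 = 0 := by
    linarith [hdiff, h1, h2, hxa, hxb, hxa', hxb']
  rcases mul_eq_zero.mp hbim with h | h
  · have hbim' : (b.im:ℝ) = r₂ - r₂' := by linarith
    have hbre0 : b.re = 0 := by
      have l1 : (-1:ℝ) < (b.re:ℝ) := by rw [hbre]; linarith [hr1.1, hr1.2, hr1'.1, hr1'.2]
      have l2 : (b.re:ℝ) < 1 := by rw [hbre]; linarith [hr1.1, hr1.2, hr1'.1, hr1'.2]
      have l1' : -1 < b.re := by exact_mod_cast l1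
      have l2' : b.re < 1 := by exact_mod_cast l2
      omega
    have hbim0 : b.im = 0 := by
      have l1 : (-1:ℝ) < (b.im:ℝ) := by rw [hbim']; linarith [hr2.1, hr2.2, hr2'.1, hr2'.2]
      have l2 : (b.im:ℝ) < 1 := by rw [hbim']; linarith [hr2.1, hr2.2, hr2'.1, hr2'.2]
      have l1' : -1 < b.im := by exact_mod_cast l1
      have l2' : b.im < 1 := by exact_mod_cast l2
      omega
    have he : emb b = 0 := by simp [emb, hbre0, hbim0]
    have he' : embc b = 0 := by simp [embc, hbre0, hbim0]
    constructor <;> linarith [h1, h2, he, he']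
  · exact absurd h (ne_of_gt hs2pos)

set_option maxHeartbeats 2000000 in
lemma unit_enum (a d : Zsqrtd 2) (y₁ y₂ y₁' y₂' : ℝ)
    (hy₁ : 0 < y₁) (hy₂ : 0 < y₂) (hy₁' : 0 < y₁') (hy₂' : 0 < y₂')
    (hA1 : emb a * y₁' = y₁) (hA2 : embc a * y₂' = y₂)
    (hd1 : emb d * y₁ = y₁') (hd2 : embc d * y₂ = y₂')
    (hra : y₁ ≤ (3+2*Real.sqrt 2) * y₂) (hrb : y₂ ≤ (3+2*Real.sqrt 2) * y₁)
    (hra' : y₁' ≤ (3+2*Real.sqrt 2) * y₂') (hrb' : y₂' ≤ (3+2*Real.sqrt 2) * y₁') :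
    a = ⟨1,0⟩ ∨ a = ⟨3,2⟩ ∨ a = ⟨3,-2⟩ := by
  have hC : (0:ℝ) < 3+2*Real.sqrt 2 := by positivity
  have hapos : 0 < emb a := pos_factor _ _ _ hA1 hy₁' hy₁
  have hapos' : 0 < embc a := pos_factor _ _ _ hA2 hy₂' hy₂
  have hdpos : 0 < emb d := pos_factor _ _ _ hd1 hy₁ hy₁'
  have hdpos' : 0 < embc d := pos_factor _ _ _ hd2 hy₂ hy₂'
  have h4pos : (0:ℝ) < y₁*y₂*y₁'*y₂' := by positivity
  have hNr : ((emb a * embc a) * (emb d * embc d)) * (y₁*y₂*y₁'*y₂')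
      = 1 * (y₁*y₂*y₁'*y₂') := by
    calc ((emb a * embc a) * (emb d * embc d)) * (y₁*y₂*y₁'*y₂')
        = (emb a * y₁') * (embc a * y₂') * ((emb d * y₁) * (embc d * y₂)) := by ring
      _ = 1 * (y₁*y₂*y₁'*y₂') := by rw [hA1, hA2, hd1, hd2]; ring
  have hNprod : (emb a * embc a) * (emb d * embc d) = 1 :=
    mul_right_cancel₀ (ne_of_gt h4pos) hNr
  have hNa1 : a.re^2 - 2*a.im^2 = 1 := by
    have hNaInt : ((a.re^2 - 2*a.im^2 : ℤ):ℝ) * ((d.re^2 - 2*d.im^2 : ℤ):ℝ) = 1 := by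
      rw [← emb_mul_embc, ← emb_mul_embc]; exact hNprod
    have hint : (a.re^2 - 2*a.im^2) * (d.re^2 - 2*d.im^2) = 1 := by exact_mod_cast hNaInt
    have hposr : (0:ℝ) < ((a.re^2 - 2*a.im^2 : ℤ):ℝ) := by
      rw [← emb_mul_embc]; exact mul_pos hapos hapos'
    have hposint : 0 < a.re^2 - 2*a.im^2 := by exact_mod_cast hposr
    rcases Int.eq_one_or_neg_one_of_mul_eq_one hint with h | h
    · exact h
    · omega
  have hnorm : emb a * embc a = 1 := by
    rw [emb_mul_embc, hNa1]; norm_num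
  have k1 : emb a * y₁' ≤ (3+2*Real.sqrt 2) * (embc a * y₂') := by rw [hA1, hA2]; exact hra
  have k1' : embc a * y₂' ≤ (3+2*Real.sqrt 2) * (emb a * y₁') := by rw [hA1, hA2]; exact hrb
  have hα2 : emb a ≤ (3+2*Real.sqrt 2)^2 * embc a := by
    nlinarith [k1, mul_le_mul_of_nonneg_left hrb' (mul_nonneg hC.le hapos'.le), hy₁']
  have hα2' : embc a ≤ (3+2*Real.sqrt 2)^2 * emb a := by
    nlinarith [k1', mul_le_mul_of_nonneg_left hra' (mul_nonneg hC.le hapos.le), hy₂']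
  have hαC : emb a ≤ 3+2*Real.sqrt 2 := by nlinarith [hα2, hnorm, hapos, hC]
  have hαC' : embc a ≤ 3+2*Real.sqrt 2 := by nlinarith [hα2', hnorm, hapos', hC]
  have hre : 2*(a.re:ℝ) = emb a + embc a := by simp only [emb, embc]; ring
  have him : 2*(a.im:ℝ)*Real.sqrt 2 = emb a - embc a := by simp only [emb, embc]; ring
  have hre1 : 1 ≤ a.re := by
    have h : (1:ℝ) ≤ (a.re:ℝ) := by nlinarith [sq_nonneg (emb a - 1), hapos, hnorm, hre]
    exact_mod_cast h
  have hre5 : a.re ≤ 5 := by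
    have h : (a.re:ℝ) < 6 := by nlinarith [hαC, hαC', hre, hs2lt, hs2pos]
    have h' : a.re < 6 := by exact_mod_cast h
    omega
  have him2a : -2 ≤ a.im := by
    have h : (-3:ℝ) < (a.im:ℝ) := by nlinarith [him, hαC', hapos, hs2gt, hs2lt]
    have h' : -3 < a.im := by exact_mod_cast h
    omega
  have him2b : a.im ≤ 2 := by
    have h : (a.im:ℝ) < 3 := by nlinarith [him, hαC, hapos', hs2gt, hs2lt]
    have h' : a.im < 3 := by exact_mod_cast h
    omega
  obtain ⟨ar, ai⟩ := a
  simp only [Zsqrtd.mk.injEq]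
  have hN' : ar*ar - 2*(ai*ai) = 1 := by
    have := hNa1
    simp only at this
    linear_combination this
  simp only at hre1 hre5 him2a him2b
  interval_cases ar <;> interval_cases ai <;> omega

set_option maxHeartbeats 4000000 in
theorem stmt3 (t : ℝ) (ht : 0 < t)
    (hcover : ∀ h ∈ Hset, ∃ γ ∈ GammaK, γ * h ∈ Dset t) :
    ∃ R₀ > (0:ℝ), ∀ x₁ x₂ y₁ y₂ θ₁ θ₂ x₁' x₂' y₁' y₂' θ₁' θ₂' : ℝ,
      (x₁, x₂) ∈ Fdom → 0 < y₁ → 0 < y₂ → t ≤ y₁ * y₂ →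
      lam ^ (-2:ℤ) ≤ y₁ / y₂ → y₁ / y₂ ≤ lam ^ 2 →
      θ₁ ∈ Set.Ico 0 Real.pi → θ₂ ∈ Set.Ico 0 Real.pi →
      (x₁', x₂') ∈ Fdom → 0 < y₁' → 0 < y₂' → t ≤ y₁' * y₂' →
      lam ^ (-2:ℤ) ≤ y₁' / y₂' → y₁' / y₂' ≤ lam ^ 2 →
      θ₁' ∈ Set.Ico 0 Real.pi → θ₂' ∈ Set.Ico 0 Real.pi →
      latimage (hmat x₁ x₂ y₁ y₂ θ₁ θ₂) = latimage (hmat x₁' x₂' y₁' y₂' θ₁' θ₂') →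
      (∃ (p : Fin 4 → ℝ) (R : ℝ), R₀ ≤ R ∧
        ∀ v ∈ latimage (hmat x₁ x₂ y₁ y₂ θ₁ θ₂), R ≤ enorm4 (v - p)) →
      θ₁ = θ₁' ∧ θ₂ = θ₂' ∧
      (∃ r : ℤ, (r = -1 ∨ r = 0 ∨ r = 1) ∧ y₁ / y₂ = lam ^ (4*r) * (y₁' / y₂')) ∧
      ((lam ^ (-2:ℤ) < y₁ / y₂ ∧ y₁ / y₂ < lam ^ 2 ∧
        lam ^ (-2:ℤ) < y₁' / y₂' ∧ y₁' / y₂' < lam ^ 2) →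
        hmat x₁ x₂ y₁ y₂ θ₁ θ₂ = hmat x₁' x₂' y₁' y₂' θ₁' θ₂') := by
  refine ⟨1 + Real.sqrt (16*lam^2 + 8*lam^2/t), by positivity, ?_⟩
  intro x₁ x₂ y₁ y₂ θ₁ θ₂ x₁' x₂' y₁' y₂' θ₁' θ₂' hxF hy₁ hy₂ hyt hr₁ hr₂ hθ₁ hθ₂
    hxF' hy₁' hy₂' hyt' hr₁' hr₂' hθ₁' hθ₂' hlat hballE
  obtain ⟨p, R, hRR, hb⟩ := hballE
  have hC : (0:ℝ) < 3 + 2*Real.sqrt 2 := by positivity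
  have hCinv : lam ^ (-2:ℤ) = (3 + 2*Real.sqrt 2)⁻¹ := by
    have h2 : lam ^ (-2:ℤ) = (lam^(2:ℤ))⁻¹ := _root_.zpow_neg lam 2
    have h3 : lam ^ (2:ℤ) = lam^2 := by norm_cast
    rw [h2, h3, hlam2]
  have hra : y₁ ≤ (3+2*Real.sqrt 2) * y₂ := by
    have h := (div_le_iff₀ hy₂).mp hr₂; rw [hlam2] at h; linarith
  have hrb : y₂ ≤ (3+2*Real.sqrt 2) * y₁ := by
    rw [hCinv] at hr₁; exact unle _ _ _ hC hy₂ hr₁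
  have hra' : y₁' ≤ (3+2*Real.sqrt 2) * y₂' := by
    have h := (div_le_iff₀ hy₂').mp hr₂'; rw [hlam2] at h; linarith
  have hrb' : y₂' ≤ (3+2*Real.sqrt 2) * y₁' := by
    rw [hCinv] at hr₁'; exact unle _ _ _ hC hy₂' hr₁'
  have hbig : 2 < y₁*y₂ := ball_forces t x₁ x₂ y₁ y₂ θ₁ θ₂ R p ht hy₁ hy₂ hyt hra hrb hRR hb
  have hb' : ∀ v ∈ latimage (hmat x₁' x₂' y₁' y₂' θ₁' θ₂'), R ≤ enorm4 (v - p) := by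
    rw [← hlat]; exact hb
  have hbig' : 2 < y₁'*y₂' :=
    ball_forces t x₁' x₂' y₁' y₂' θ₁' θ₂' R p ht hy₁' hy₂' hyt' hra' hrb' hRR hb'
  -- generator (0,1)
  have hmem2 : Matrix.vecMul (latvec 0 1) (hmat x₁ x₂ y₁ y₂ θ₁ θ₂)
      ∈ latimage (hmat x₁' x₂' y₁' y₂' θ₁' θ₂') := by
    rw [← hlat]; exact ⟨latvec 0 1, ⟨0, 1, rfl⟩, rfl⟩
  obtain ⟨v2, ⟨c, d, hv2⟩, hcd⟩ := hmem2
  subst hv2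
  simp only [] at hcd
  rw [vecMul_latvec_hmat, vecMul_latvec_hmat] at hcd
  have C0 : emb c * y₁' * Real.cos θ₁' + (emb c * x₁' + emb d) * y₁'⁻¹ * Real.sin θ₁'
      = y₁⁻¹ * Real.sin θ₁ := by
    have h := congrFun hcd 0
    simp only [Matrix.cons_val_zero, emb_zero, emb_one, embc_zero, embc_one] at h
    linear_combination h
  have C1 : -(emb c * y₁') * Real.sin θ₁' + (emb c * x₁' + emb d) * y₁'⁻¹ * Real.cos θ₁'
      = y₁⁻¹ * Real.cos θ₁ := by
    have h := congrFun hcd 1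
    simp only [Matrix.cons_val_one, Matrix.head_cons, Matrix.cons_val_zero, emb_zero, emb_one, embc_zero,
      embc_one] at h
    linear_combination h
  have C2 : embc c * y₂' * Real.cos θ₂' + (embc c * x₂' + embc d) * y₂'⁻¹ * Real.sin θ₂'
      = y₂⁻¹ * Real.sin θ₂ := by
    have h := congrFun hcd 2
    simp only [Matrix.cons_val_two, Matrix.tail_cons, Matrix.head_cons, emb_zero, emb_one,
      embc_zero, embc_one] at h
    linear_combination h
  have C3 : -(embc c * y₂') * Real.sin θ₂' + (embc c * x₂' + embc d) * y₂'⁻¹ * Real.cos θ₂'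
      = y₂⁻¹ * Real.cos θ₂ := by
    have h := congrFun hcd 3
    simp only [Matrix.cons_val_three, Matrix.tail_cons, Matrix.head_cons, emb_zero, emb_one,
      embc_zero, embc_one] at h
    linear_combination h
  have B1 := block_step1 y₁ y₁' θ₁ θ₁' (emb c) (emb d) x₁' hy₁ hy₁' hθ₁ hθ₁' C0 C1
  have B2 := block_step1 y₂ y₂' θ₂ θ₂' (embc c) (embc d) x₂' hy₂ hy₂' hθ₂ hθ₂' C2 C3
  have hc0 : c = 0 := by
    apply zsqrtd_zero_of_norm_small
    apply prod_small (emb c) (embc c) (y₁*y₁') (y₂*y₂')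
    · calc (emb c*(y₁*y₁'))^2 = (emb c*y₁*y₁')^2 := by ring
        _ ≤ 1 := B1.1
    · calc (embc c*(y₂*y₂'))^2 = (embc c*y₂*y₂')^2 := by ring
        _ ≤ 1 := B2.1
    · exact four_lt y₁ y₂ y₁' y₂' hbig hbig'
  obtain ⟨hθeq1, hd1⟩ := B1.2 (by rw [hc0]; exact emb_zero)
  obtain ⟨hθeq2, hd2⟩ := B2.2 (by rw [hc0]; exact embc_zero)
  -- generator (1,0)
  have hmem1 : Matrix.vecMul (latvec 1 0) (hmat x₁ x₂ y₁ y₂ θ₁ θ₂)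
      ∈ latimage (hmat x₁' x₂' y₁' y₂' θ₁' θ₂') := by
    rw [← hlat]; exact ⟨latvec 1 0, ⟨1, 0, rfl⟩, rfl⟩
  obtain ⟨v1, ⟨a, b, hv1⟩, hab⟩ := hmem1
  subst hv1
  simp only [] at hab
  rw [vecMul_latvec_hmat, vecMul_latvec_hmat] at hab
  rw [← hθeq1, ← hθeq2] at hab
  have A0 : emb a * y₁' * Real.cos θ₁ + (emb a * x₁' + emb b) * y₁'⁻¹ * Real.sin θ₁
      = y₁ * Real.cos θ₁ + x₁ * y₁⁻¹ * Real.sin θ₁ := by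
    have h := congrFun hab 0
    simp only [Matrix.cons_val_zero, emb_zero, emb_one, embc_zero, embc_one] at h
    linear_combination h
  have A1 : -(emb a * y₁') * Real.sin θ₁ + (emb a * x₁' + emb b) * y₁'⁻¹ * Real.cos θ₁
      = -y₁ * Real.sin θ₁ + x₁ * y₁⁻¹ * Real.cos θ₁ := by
    have h := congrFun hab 1
    simp only [Matrix.cons_val_one, Matrix.head_cons, Matrix.cons_val_zero, emb_zero, emb_one, embc_zero,
      embc_one] at h
    linear_combination h
  have A2 : embc a * y₂' * Real.cos θ₂ + (embc a * x₂' + embc b) * y₂'⁻¹ * Real.sin θ₂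
      = y₂ * Real.cos θ₂ + x₂ * y₂⁻¹ * Real.sin θ₂ := by
    have h := congrFun hab 2
    simp only [Matrix.cons_val_two, Matrix.tail_cons, Matrix.head_cons, emb_zero, emb_one,
      embc_zero, embc_one] at h
    linear_combination h
  have A3 : -(embc a * y₂') * Real.sin θ₂ + (embc a * x₂' + embc b) * y₂'⁻¹ * Real.cos θ₂
      = -y₂ * Real.sin θ₂ + x₂ * y₂⁻¹ * Real.cos θ₂ := by
    have h := congrFun hab 3
    simp only [Matrix.cons_val_three, Matrix.tail_cons, Matrix.head_cons, emb_zero, emb_one,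
      embc_zero, embc_one] at h
    linear_combination h
  obtain ⟨hA1, hX1⟩ := block_step2 y₁ y₁' θ₁ (emb a) (emb b) x₁ x₁' hy₁ hy₁' A0 A1
  obtain ⟨hA2, hX2⟩ := block_step2 y₂ y₂' θ₂ (embc a) (embc b) x₂ x₂' hy₂ hy₂' A2 A3
  have hau := unit_enum a d y₁ y₂ y₁' y₂' hy₁ hy₂ hy₁' hy₂' hA1 hA2 hd1 hd2 hra hrb hra' hrb'
  have MAIN : (∃ r : ℤ, (r = -1 ∨ r = 0 ∨ r = 1) ∧ y₁ / y₂ = lam ^ (4*r) * (y₁' / y₂')) ∧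
      ((lam ^ (-2:ℤ) < y₁ / y₂ ∧ y₁ / y₂ < lam ^ 2 ∧
        lam ^ (-2:ℤ) < y₁' / y₂' ∧ y₁' / y₂' < lam ^ 2) →
        hmat x₁ x₂ y₁ y₂ θ₁ θ₂ = hmat x₁' x₂' y₁' y₂' θ₁' θ₂') := by
    rcases hau with ha | ha | ha
    · -- a = 1
      rw [ha, emb_mk] at hA1 hX1
      rw [ha, embc_mk] at hA2 hX2
      norm_num at hA1 hA2 hX1 hX2
      constructor
      · refine ⟨0, Or.inr (Or.inl rfl), ?_⟩
        have h0 : lam ^ ((4:ℤ)*0) = 1 := by norm_num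
        rw [h0, one_mul, ← hA1, ← hA2]
      · intro _
        rw [hA1] at hX1
        rw [hA2] at hX2
        have hb1 : emb b = x₁ - x₁' := xdiff x₁ x₁' y₁ (emb b) hy₁ hX1
        have hb2 : embc b = x₂ - x₂' := xdiff x₂ x₂' y₂ (embc b) hy₂ hX2
        obtain ⟨hx1e, hx2e⟩ := fdom_unique x₁ x₂ x₁' x₂' b hxF hxF' hb1 hb2
        rw [hx1e, hx2e, hθeq1, hθeq2, ← hA1, ← hA2]
    · -- a = 3 + 2√2
      rw [ha, emb_mk] at hA1
      rw [ha, embc_mk] at hA2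
      push_cast at hA1 hA2
      constructor
      · refine ⟨1, Or.inr (Or.inr rfl), ?_⟩
        have hzp : lam ^ ((4:ℤ)*1) = 17+12*Real.sqrt 2 := by
          have e1 : ((4:ℤ)*1) = ((4:ℕ):ℤ) := by norm_num
          rw [e1, zpow_natCast, hlam4]
        rw [hzp]
        exact ratio32 y₁ y₂ y₁' y₂' hy₂ hy₂' hA1 hA2
      · rintro ⟨g1, g2, g3, g4⟩
        exfalso
        have g2' : y₁ < (3+2*Real.sqrt 2)*y₂ := by
          have h := (div_lt_iff₀ hy₂).mp g2; rw [hlam2] at h; linarith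
        have g3' : y₂' < (3+2*Real.sqrt 2)*y₁' := by
          rw [hCinv] at g3; exact unlt _ _ _ hC hy₂' g3
        exact contra32 y₁ y₂ y₁' y₂' hA1 hA2 g2' g3'
    · -- a = 3 - 2√2
      rw [ha, emb_mk] at hA1
      rw [ha, embc_mk] at hA2
      push_cast at hA1 hA2
      constructor
      · refine ⟨-1, Or.inl rfl, ?_⟩
        have hzp : lam ^ ((4:ℤ)*(-1)) = 17-12*Real.sqrt 2 := by
          have e1 : ((4:ℤ)*(-1)) = -((4:ℕ):ℤ) := by norm_num
          rw [e1, _root_.zpow_neg, zpow_natCast, hlam4, inv1712]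
        rw [hzp]
        have hA1' : (3-2*Real.sqrt 2)*y₁' = y₁ := by linear_combination hA1
        have hA2' : (3+2*Real.sqrt 2)*y₂' = y₂ := by linear_combination hA2
        exact ratio3m2 y₁ y₂ y₁' y₂' hy₂ hy₂' hA1' hA2'
      · rintro ⟨g1, g2, g3, g4⟩
        exfalso
        have hA1' : (3-2*Real.sqrt 2)*y₁' = y₁ := by linear_combination hA1
        have hA2' : (3+2*Real.sqrt 2)*y₂' = y₂ := by linear_combination hA2
        have g1' : y₂ < (3+2*Real.sqrt 2)*y₁ := by
          rw [hCinv] at g1; exact unlt _ _ _ hC hy₂ g1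
        have g4' : y₁' < (3+2*Real.sqrt 2)*y₂' := by
          have h := (div_lt_iff₀ hy₂').mp g4; rw [hlam2] at h; linarith
        exact contra3m2 y₁ y₂ y₁' y₂' hA1' hA2' g1' g4'
  exact ⟨hθeq1, hθeq2, MAIN.1, MAIN.2⟩


end
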